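/- arXiv:2301.11588 — 7 statements merged into one kernel-verified Lean document; each statement's English description precedes it below -/
import Mathlib

section
/- Fix positive integers M and k. Let u ∈ ℝ^M and l^{(1)},…,l^{(k)} ∈ ℝ^M, and let D = Dom({l^{(1)},…,l^{(k)}}) be the dominated region of the finite set {l^{(1)},…,l^{(k)}}. Then the infimum distance (in the sup-metric) from u to D satisfies infDist(u, D) = max( min_{1≤i≤k} max_{1≤j≤M} (u_j − l^{(i)}_j), 0 ). -/
/-- The infimum sup-metric distance from `u` to the dominated region of the
finite set `{l 1, …, l k}` equals `max (min_i max_j (u j - l i j)) 0`. -/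
theorem stmt0 (M k : ℕ) (hM : 0 < M) (hk : 0 < k)
    (u : Fin M → ℝ) (l : Fin k → Fin M → ℝ) :
    Metric.infDist u {s : Fin M → ℝ | ∃ i : Fin k, s ≤ l i} =
      max (⨅ i : Fin k, ⨆ j : Fin M, (u j - l i j)) 0 := by
  haveI : Nonempty (Fin k) := ⟨⟨0, hk⟩⟩
  haveI : Nonempty (Fin M) := ⟨⟨0, hM⟩⟩
  set A : Fin k → ℝ := fun i => ⨆ j : Fin M, (u j - l i j) with hA
  have hbddA : ∀ i, BddAbove (Set.range fun j : Fin M => u j - l i j) :=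
    fun i => Set.Finite.bddAbove (Set.finite_range _)
  have hbddbelow : BddBelow (Set.range A) := Set.Finite.bddBelow (Set.finite_range _)
  obtain ⟨i₀, hi₀⟩ : ∃ i₀, ∀ i, A i₀ ≤ A i := Finite.exists_min A
  have hinf : (⨅ i, A i) = A i₀ := le_antisymm (ciInf_le hbddbelow i₀) (le_ciInf hi₀)
  set D := {s : Fin M → ℝ | ∃ i : Fin k, s ≤ l i} with hD
  have hDne : D.Nonempty := ⟨l ⟨0, hk⟩, ⟨0, hk⟩, le_refl _⟩
  apply le_antisymm
  · -- upper bound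
    set t : ℝ := max (A i₀) 0 with ht
    have ht0 : 0 ≤ t := le_max_right _ _
    have hmem : (fun j => u j - t) ∈ D := by
      refine ⟨i₀, fun j => ?_⟩
      have h1 : u j - l i₀ j ≤ A i₀ := le_ciSup (hbddA i₀) j
      have h2 : u j - l i₀ j ≤ t := h1.trans (le_max_left _ _)
      show u j - t ≤ l i₀ j
      linarith
    have hdist : dist u (fun j => u j - t) ≤ t := by
      rw [dist_pi_le_iff ht0]
      intro j
      simp [Real.dist_eq, abs_of_nonneg ht0]
    calc Metric.infDist u D ≤ dist u (fun j => u j - t) :=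
          Metric.infDist_le_dist_of_mem hmem
      _ ≤ t := hdist
      _ = max (⨅ i, A i) 0 := by rw [hinf]
  · -- lower bound
    refine le_of_not_gt fun hlt => ?_
    obtain ⟨y, ⟨i, hy⟩, hdy⟩ := (Metric.infDist_lt_iff hDne).1 hlt
    have hle : max (⨅ i, A i) 0 ≤ dist u y := by
      refine max_le ?_ dist_nonneg
      refine le_trans (ciInf_le hbddbelow i) (ciSup_le fun j => ?_)
      have h1 : u j - l i j ≤ u j - y j := by have := hy j; linarith
      have h2 : u j - y j ≤ dist (u j) (y j) := by
        rw [Real.dist_eq]; exact le_abs_self _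
      exact h1.trans (h2.trans (dist_le_pi_dist u y j))
    exact absurd hdy (not_lt.2 hle)
end

section
/- Let 𝓧 be a nonempty finite set, M a positive integer, and L, U, F : 𝓧 → ℝ^M functions satisfying L(x) ≤ F(x) and F(x) ≤ U(x) (componentwise) for every x ∈ 𝓧. Let Π̂ = {x ∈ 𝓧 : L(x) ∈ Par(L(𝓧))} and A = max_{x∈𝓧} infDist(U(x), Dom(L(Π̂))). Then: (i) for every y ∈ Par(F(𝓧)), infDist(y, Par(F(Π̂))) ≤ A; and (ii) for every y ∈ F(Π̂), infDist(y, Par(F(𝓧))) ≤ A. -/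
/-- The dominated region of a set `B ⊆ ℝ^M` (with the componentwise order). -/
def Dom {M : ℕ} (B : Set (Fin M → ℝ)) : Set (Fin M → ℝ) :=
  {s | ∃ s' ∈ B, s ≤ s'}

/-- The Pareto front of `B`: the topological frontier of its dominated region. -/
def Par {M : ℕ} (B : Set (Fin M → ℝ)) : Set (Fin M → ℝ) :=
  frontier (Dom B)

section Aux

variable {M : ℕ}

/-- `gf hM B hB y = max_{b ∈ B} min_j (b j - y j)`. -/
noncomputable def gf (hM : 0 < M) (B : Finset (Fin M → ℝ)) (hB : B.Nonempty)
    (y : Fin M → ℝ) : ℝ :=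
  B.sup' hB fun b => Finset.univ.inf' ⟨⟨0, hM⟩, Finset.mem_univ _⟩ fun j => b j - y j

lemma le_gf (hM : 0 < M) {B : Finset (Fin M → ℝ)} (hB : B.Nonempty)
    {y : Fin M → ℝ} {c : ℝ} {b : Fin M → ℝ} (hb : b ∈ B)
    (h : ∀ j, c ≤ b j - y j) : c ≤ gf hM B hB y := by
  unfold gf
  exact (Finset.le_sup'_iff hB).2 ⟨b, hb, Finset.le_inf' _ _ fun j _ => h j⟩

lemma lt_gf (hM : 0 < M) {B : Finset (Fin M → ℝ)} (hB : B.Nonempty)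
    {y : Fin M → ℝ} {c : ℝ} {b : Fin M → ℝ} (hb : b ∈ B)
    (h : ∀ j, c < b j - y j) : c < gf hM B hB y := by
  unfold gf
  refine (Finset.lt_sup'_iff hB).2 ⟨b, hb, ?_⟩
  exact (Finset.lt_inf'_iff _).2 fun j _ => h j

lemma gf_le (hM : 0 < M) {B : Finset (Fin M → ℝ)} (hB : B.Nonempty)
    {y : Fin M → ℝ} {c : ℝ} (h : ∀ b ∈ B, ∃ j, b j - y j ≤ c) :
    gf hM B hB y ≤ c := by
  unfold gf
  refine Finset.sup'_le _ _ fun b hb => ?_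
  obtain ⟨j, hj⟩ := h b hb
  exact le_trans (Finset.inf'_le _ (Finset.mem_univ j)) hj

lemma gf_exists (hM : 0 < M) {B : Finset (Fin M → ℝ)} (hB : B.Nonempty)
    (y : Fin M → ℝ) : ∃ b ∈ B, ∀ j, gf hM B hB y ≤ b j - y j := by
  obtain ⟨b, hb, hbe⟩ := Finset.exists_mem_eq_sup' hB
    (fun b => Finset.univ.inf' ⟨⟨0, hM⟩, Finset.mem_univ _⟩ fun j => b j - y j)
  refine ⟨b, hb, fun j => ?_⟩
  unfold gf
  rw [hbe]
  exact Finset.inf'_le _ (Finset.mem_univ j)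

lemma gf_lip (hM : 0 < M) {B : Finset (Fin M → ℝ)} (hB : B.Nonempty)
    (y z : Fin M → ℝ) : gf hM B hB y ≤ gf hM B hB z + dist y z := by
  conv_lhs => unfold gf
  refine Finset.sup'_le _ _ fun b hb => ?_
  obtain ⟨j, -, hj⟩ := Finset.exists_mem_eq_inf'
    (⟨⟨0, hM⟩, Finset.mem_univ _⟩ : (Finset.univ : Finset (Fin M)).Nonempty)
    (fun j => b j - z j)
  have h1 : (Finset.univ.inf' ⟨⟨0, hM⟩, Finset.mem_univ _⟩ fun j => b j - y j) ≤ b j - y j :=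
    Finset.inf'_le _ (Finset.mem_univ j)
  have h2 : z j - y j ≤ dist y z := by
    have hd := dist_le_pi_dist y z j
    rw [Real.dist_eq] at hd
    have := neg_le_abs (y j - z j)
    linarith
  have h3 : b j - z j ≤ gf hM B hB z := by
    rw [← hj]
    unfold gf
    exact (Finset.le_sup'_iff hB).2 ⟨b, hb, le_rfl⟩
  linarith

lemma gf_le_shift (hM : 0 < M) {B : Finset (Fin M → ℝ)} (hB : B.Nonempty)
    (y : Fin M → ℝ) (t : ℝ) :
    gf hM B hB y ≤ gf hM B hB (fun j => y j + t) + t := by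
  conv_lhs => unfold gf
  refine Finset.sup'_le _ _ fun b hb => ?_
  obtain ⟨j, -, hj⟩ := Finset.exists_mem_eq_inf'
    (⟨⟨0, hM⟩, Finset.mem_univ _⟩ : (Finset.univ : Finset (Fin M)).Nonempty)
    (fun j => b j - (y j + t))
  have h1 : (Finset.univ.inf' ⟨⟨0, hM⟩, Finset.mem_univ _⟩ fun j => b j - y j) ≤ b j - y j :=
    Finset.inf'_le _ (Finset.mem_univ j)
  have h3 : b j - (y j + t) ≤ gf hM B hB (fun j => y j + t) := by
    rw [← hj]
    unfold gf
    exact (Finset.le_sup'_iff hB).2 ⟨b, hb, le_rfl⟩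
  linarith

lemma gf_shift (hM : 0 < M) {B : Finset (Fin M → ℝ)} (hB : B.Nonempty)
    (y : Fin M → ℝ) (t : ℝ) :
    gf hM B hB (fun j => y j + t) = gf hM B hB y - t := by
  have h1 := gf_le_shift hM hB y t
  have h2 := gf_le_shift hM hB (fun j => y j + t) (-t)
  have he : (fun j => (y j + t) + (-t)) = y := by funext j; ring
  rw [he] at h2
  linarith

lemma gf_continuous (hM : 0 < M) {B : Finset (Fin M → ℝ)} (hB : B.Nonempty) :
    Continuous (gf hM B hB) := by
  have : LipschitzWith 1 (gf hM B hB) := by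
    apply LipschitzWith.of_dist_le_mul
    intro y z
    rw [NNReal.coe_one, one_mul, Real.dist_eq, abs_sub_le_iff]
    have ha := gf_lip hM hB y z
    have hb' := gf_lip hM hB z y
    rw [dist_comm z y] at hb'
    constructor <;> linarith
  exact this.continuous

lemma mem_Dom_iff (hM : 0 < M) {B : Finset (Fin M → ℝ)} (hB : B.Nonempty)
    {y : Fin M → ℝ} : y ∈ Dom (↑B : Set (Fin M → ℝ)) ↔ 0 ≤ gf hM B hB y := by
  constructor
  · rintro ⟨b, hb, hle⟩
    exact le_gf hM hB hb fun j => by have := hle j; simp only [sub_nonneg]; exact this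
  · intro h
    obtain ⟨b, hb, hbe⟩ := gf_exists hM hB y
    exact ⟨b, hb, fun j => by have := hbe j; linarith⟩

lemma Dom_closed (hM : 0 < M) {B : Finset (Fin M → ℝ)} (hB : B.Nonempty) :
    IsClosed (Dom (↑B : Set (Fin M → ℝ))) := by
  have hset : Dom (↑B : Set (Fin M → ℝ)) = gf hM B hB ⁻¹' Set.Ici 0 := by
    ext y; exact mem_Dom_iff hM hB
  rw [hset]
  exact IsClosed.preimage (gf_continuous hM hB) isClosed_Ici

lemma not_mem_interior (hM : 0 < M) {B : Finset (Fin M → ℝ)} (hB : B.Nonempty)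
    {y : Fin M → ℝ} (h : gf hM B hB y = 0) :
    y ∉ interior (Dom (↑B : Set (Fin M → ℝ))) := by
  intro hy
  rw [mem_interior_iff_mem_nhds, Metric.mem_nhds_iff] at hy
  obtain ⟨ε, hε, hball⟩ := hy
  have hmem : (fun j => y j + ε / 2) ∈ Metric.ball y ε := by
    rw [Metric.mem_ball, dist_comm]
    have hle : dist y (fun j => y j + ε / 2) ≤ ε / 2 := by
      refine (dist_pi_le_iff (by linarith)).2 fun j => ?_
      rw [Real.dist_eq]
      have : y j - (y j + ε / 2) = -(ε / 2) := by ring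
      rw [this, abs_neg, abs_of_nonneg (by linarith)]
    linarith
  have hD := (mem_Dom_iff hM hB).1 (hball hmem)
  rw [gf_shift hM hB, h] at hD
  linarith

lemma mem_Par_iff (hM : 0 < M) {B : Finset (Fin M → ℝ)} (hB : B.Nonempty)
    {y : Fin M → ℝ} :
    y ∈ Par (↑B : Set (Fin M → ℝ)) ↔ gf hM B hB y = 0 := by
  constructor
  · rintro ⟨hcl, hint⟩
    have h1 : 0 ≤ gf hM B hB y := by
      rw [← mem_Dom_iff hM hB]
      exact (Dom_closed hM hB).closure_subset hcl
    rcases lt_or_eq_of_le h1 with h2 | h2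
    · exfalso
      apply hint
      have hsub : gf hM B hB ⁻¹' Set.Ioi 0 ⊆ interior (Dom (↑B : Set (Fin M → ℝ))) :=
        interior_maximal (fun z hz => (mem_Dom_iff hM hB).2 (le_of_lt hz))
          (IsOpen.preimage (gf_continuous hM hB) isOpen_Ioi)
      exact hsub h2
    · exact h2.symm
  · intro h
    constructor
    · exact subset_closure ((mem_Dom_iff hM hB).2 (le_of_eq h.symm))
    · exact not_mem_interior hM hB h

lemma Par_nonempty (hM : 0 < M) {B : Finset (Fin M → ℝ)} (hB : B.Nonempty) :
    (Par (↑B : Set (Fin M → ℝ))).Nonempty := by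
  obtain ⟨y, hy⟩ := id hB
  refine ⟨fun j => y j + gf hM B hB y, ?_⟩
  rw [mem_Par_iff hM hB, gf_shift hM hB, sub_self]

lemma infDist_Par (hM : 0 < M) {B : Finset (Fin M → ℝ)} (hB : B.Nonempty)
    (y : Fin M → ℝ) :
    Metric.infDist y (Par (↑B : Set (Fin M → ℝ))) = |gf hM B hB y| := by
  refine le_antisymm ?_ ?_
  · have hz : (fun j => y j + gf hM B hB y) ∈ Par (↑B : Set (Fin M → ℝ)) := by
      rw [mem_Par_iff hM hB, gf_shift hM hB, sub_self]
    refine le_trans (Metric.infDist_le_dist_of_mem hz) ?_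
    refine (dist_pi_le_iff (abs_nonneg _)).2 fun j => ?_
    rw [Real.dist_eq]
    have : y j - (y j + gf hM B hB y) = -(gf hM B hB y) := by ring
    rw [this, abs_neg]
  · by_contra hlt
    push_neg at hlt
    obtain ⟨z, hz, hdz⟩ := (Metric.infDist_lt_iff (Par_nonempty hM hB)).1 hlt
    rw [mem_Par_iff hM hB] at hz
    have h1 := gf_lip hM hB y z
    have h2 := gf_lip hM hB z y
    rw [dist_comm z y] at h2
    rw [hz] at h1 h2
    cases' abs_cases (gf hM B hB y) with hc hc <;> rw [hc.1] at hdz <;> linarith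

lemma neg_gf_le_infDist_Dom (hM : 0 < M) {B : Finset (Fin M → ℝ)} (hB : B.Nonempty)
    (y : Fin M → ℝ) :
    -gf hM B hB y ≤ Metric.infDist y (Dom (↑B : Set (Fin M → ℝ))) := by
  by_contra hlt
  push_neg at hlt
  have hne : (Dom (↑B : Set (Fin M → ℝ))).Nonempty := by
    obtain ⟨b, hb⟩ := hB
    exact ⟨b, b, hb, le_refl _⟩
  obtain ⟨z, hz, hdz⟩ := (Metric.infDist_lt_iff hne).1 hlt
  rw [mem_Dom_iff hM hB] at hz
  have h2 := gf_lip hM hB z y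
  rw [dist_comm z y] at h2
  linarith

end Aux

theorem stmt1 (𝓧 : Type*) [Fintype 𝓧] [Nonempty 𝓧] {M : ℕ} (hM : 0 < M)
    (L U F : 𝓧 → (Fin M → ℝ))
    (hLF : ∀ x, L x ≤ F x) (hFU : ∀ x, F x ≤ U x)
    (Pihat : Set 𝓧) (hPi : Pihat = {x | L x ∈ Par (Set.range L)})
    (A : ℝ) (hA : A = ⨆ x : 𝓧, Metric.infDist (U x) (Dom (L '' Pihat))) :
    (∀ y ∈ Par (Set.range F), Metric.infDist y (Par (F '' Pihat)) ≤ A) ∧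
    (∀ y ∈ F '' Pihat, Metric.infDist y (Par (Set.range F)) ≤ A) := by
  classical
  set BL : Finset (Fin M → ℝ) := Finset.univ.image L with hBLdef
  have hBL : BL.Nonempty := (Finset.univ_nonempty).image L
  have hBLcoe : (↑BL : Set (Fin M → ℝ)) = Set.range L := by
    simp [hBLdef]
  set BF : Finset (Fin M → ℝ) := Finset.univ.image F with hBFdef
  have hBF : BF.Nonempty := (Finset.univ_nonempty).image F
  have hBFcoe : (↑BF : Set (Fin M → ℝ)) = Set.range F := by
    simp [hBFdef]
  have hPiMem : ∀ x, x ∈ Pihat ↔ gf hM BL hBL (L x) = 0 := by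
    intro x
    rw [hPi, Set.mem_setOf_eq, ← hBLcoe, mem_Par_iff hM hBL]
  have hgL_nonneg : ∀ x, 0 ≤ gf hM BL hBL (L x) := fun x =>
    le_gf hM hBL (Finset.mem_image_of_mem L (Finset.mem_univ x)) (fun j => by simp)
  have hdom : ∀ x : 𝓧, ∃ x' ∈ Pihat, L x ≤ L x' := by
    intro x
    set S : Finset 𝓧 := Finset.univ.filter (fun x' => L x ≤ L x') with hSdef
    have hxS : x ∈ S := by simp [hSdef]
    obtain ⟨x', hx'S, hx'max⟩ := S.exists_max_image (fun x' => ∑ j, L x' j) ⟨x, hxS⟩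
    have hx'dom : L x ≤ L x' := (Finset.mem_filter.1 hx'S).2
    refine ⟨x', ?_, hx'dom⟩
    rw [hPiMem]
    refine le_antisymm ?_ (hgL_nonneg x')
    refine gf_le hM hBL fun b hb => ?_
    obtain ⟨x'', -, rfl⟩ := Finset.mem_image.1 hb
    by_contra hc
    push_neg at hc
    have hlt : ∀ j, L x' j < L x'' j := fun j => by have := hc j; linarith
    have hx''S : x'' ∈ S := by
      simp only [hSdef, Finset.mem_filter, Finset.mem_univ, true_and]
      exact le_trans hx'dom (fun j => le_of_lt (hlt j))
    have hsum : ∑ j, L x' j < ∑ j, L x'' j :=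
      Finset.sum_lt_sum_of_nonempty ⟨⟨0, hM⟩, Finset.mem_univ _⟩ (fun j _ => hlt j)
    exact absurd (hx'max x'' hx''S) (not_le.2 hsum)
  have hPine : Pihat.Nonempty := by
    obtain ⟨x⟩ := ‹Nonempty 𝓧›
    obtain ⟨x', hx', -⟩ := hdom x
    exact ⟨x', hx'⟩
  set PF : Finset 𝓧 := Finset.univ.filter (· ∈ Pihat) with hPFdef
  have hPFcoe : (↑PF : Set 𝓧) = Pihat := by
    ext x; simp [hPFdef]
  set BLP : Finset (Fin M → ℝ) := PF.image L with hBLPdef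
  have hBLP : BLP.Nonempty := by
    obtain ⟨x, hx⟩ := hPine
    exact ⟨L x, Finset.mem_image_of_mem L (show x ∈ PF by simp [hPFdef, hx])⟩
  have hBLPcoe : (↑BLP : Set (Fin M → ℝ)) = L '' Pihat := by
    rw [hBLPdef, Finset.coe_image, hPFcoe]
  set BFP : Finset (Fin M → ℝ) := PF.image F with hBFPdef
  have hBFP : BFP.Nonempty := by
    obtain ⟨x, hx⟩ := hPine
    exact ⟨F x, Finset.mem_image_of_mem F (show x ∈ PF by simp [hPFdef, hx])⟩
  have hBFPcoe : (↑BFP : Set (Fin M → ℝ)) = F '' Pihat := by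
    rw [hBFPdef, Finset.coe_image, hPFcoe]
  have hAx : ∀ x : 𝓧, Metric.infDist (U x) (Dom (L '' Pihat)) ≤ A := by
    intro x
    rw [hA]
    exact le_ciSup (Finite.bddAbove_range fun x => Metric.infDist (U x) (Dom (L '' Pihat))) x
  have hA0 : 0 ≤ A := by
    obtain ⟨x⟩ := ‹Nonempty 𝓧›
    exact le_trans Metric.infDist_nonneg (hAx x)
  have hgLP : ∀ x : 𝓧, -A ≤ gf hM BLP hBLP (U x) := by
    intro x
    have h1 := neg_gf_le_infDist_Dom hM hBLP (U x)
    rw [hBLPcoe] at h1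
    have := hAx x
    linarith
  have hkey : ∀ x' : 𝓧, ∃ x'' ∈ Pihat, ∀ j, U x' j - A ≤ L x'' j := by
    intro x'
    obtain ⟨b, hb, hble⟩ := gf_exists hM hBLP (U x')
    obtain ⟨x'', hx''PF, rfl⟩ := Finset.mem_image.1 hb
    have hx'' : x'' ∈ Pihat := by
      rw [← hPFcoe]; exact_mod_cast hx''PF
    refine ⟨x'', hx'', fun j => ?_⟩
    have h1 := hble j
    have h2 := hgLP x'
    linarith
  constructor
  · intro y hy
    rw [← hBFcoe, mem_Par_iff hM hBF] at hy
    rw [← hBFPcoe, infDist_Par hM hBFP, abs_le]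
    constructor
    · obtain ⟨b, hb, hble⟩ := gf_exists hM hBF y
      obtain ⟨x', -, rfl⟩ := Finset.mem_image.1 hb
      obtain ⟨x'', hx'', hle⟩ := hkey x'
      refine le_gf hM hBFP (Finset.mem_image_of_mem F (show x'' ∈ PF by simp [hPFdef, hx''])) fun j => ?_
      have h1 := hble j
      have h2 := hle j
      have h3 := hLF x'' j
      have h4 := hFU x' j
      rw [hy] at h1
      linarith
    · have hsub : gf hM BFP hBFP y ≤ gf hM BF hBF y := by
        obtain ⟨b, hb, hble⟩ := gf_exists hM hBFP y
        have hbBF : b ∈ BF := by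
          obtain ⟨x'', -, rfl⟩ := Finset.mem_image.1 hb
          exact Finset.mem_image_of_mem F (Finset.mem_univ _)
        exact le_gf hM hBF hbBF hble
      rw [hy] at hsub
      linarith
  · rintro y ⟨x, hx, rfl⟩
    rw [← hBFcoe, infDist_Par hM hBF]
    have hge : 0 ≤ gf hM BF hBF (F x) :=
      le_gf hM hBF (Finset.mem_image_of_mem F (Finset.mem_univ x)) (fun j => by simp)
    rw [abs_of_nonneg hge]
    refine gf_le hM hBF fun b hb => ?_
    obtain ⟨x', -, rfl⟩ := Finset.mem_image.1 hb
    by_contra hc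
    push_neg at hc
    obtain ⟨x'', hx'', hle⟩ := hkey x'
    have hlt : ∀ j, L x j < L x'' j := by
      intro j
      have h1 := hc j
      have h2 := hle j
      have h3 := hLF x j
      have h4 := hFU x' j
      linarith
    have hgpos : 0 < gf hM BL hBL (L x) := by
      refine lt_gf hM hBL (Finset.mem_image_of_mem L (Finset.mem_univ x'')) fun j => ?_
      have := hlt j
      linarith
    rw [(hPiMem x).1 hx] at hgpos
    exact lt_irrefl _ hgpos
end

section
/- Let 𝓧 be a nonempty finite set, M a positive integer, ε_lcb, ε_ucb, ε_𝓧 ≥ 0, and L, U, F : 𝓧 → ℝ^M functions satisfying L(x)_j − ε_lcb ≤ F(x)_j and F(x)_j ≤ U(x)_j + ε_ucb for every x ∈ 𝓧 and every coordinate j. Let Π̂ = {x ∈ 𝓧 : L(x) ∈ Par(L(𝓧))}, and suppose x* ∈ 𝓧 satisfies max_{x∈𝓧} infDist(U(x), Dom(L(Π̂))) − infDist(U(x*), Dom(L(Π̂))) ≤ ε_𝓧. Then: (i) for every y ∈ Par(F(𝓧)), infDist(y, Par(F(Π̂))) ≤ infDist(U(x*), Dom(L(Π̂))) + ε_lcb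 + ε_ucb + ε_𝓧; and (ii) for every y ∈ F(Π̂), infDist(y, Par(F(𝓧))) ≤ infDist(U(x*), Dom(L(Π̂))) + ε_lcb + ε_ucb + ε_𝓧. -/
open Metric Finset

lemma Dom_eq_iUnion {M : ℕ} (B : Set (Fin M → ℝ)) : Dom B = ⋃ b ∈ B, Set.Iic b := by
  ext s
  simp only [Dom, Set.mem_setOf_eq, Set.mem_iUnion, Set.mem_Iic, exists_prop]

lemma isClosed_Dom {M : ℕ} {B : Set (Fin M → ℝ)} (hB : B.Finite) : IsClosed (Dom B) := by
  rw [Dom_eq_iUnion]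
  exact hB.isClosed_biUnion (fun b _ => isClosed_Iic)

/-- If `y` is in the interior of `Dom B`, some element of `B` strictly dominates `y`. -/
lemma interior_Dom_elim {M : ℕ} {B : Set (Fin M → ℝ)} {y : Fin M → ℝ}
    (h : y ∈ interior (Dom B)) : ∃ b ∈ B, ∃ δ > (0:ℝ), ∀ j, y j + δ ≤ b j := by
  rw [mem_interior_iff_mem_nhds, Metric.mem_nhds_iff] at h
  obtain ⟨ε, hε, hball⟩ := h
  have hmem : (fun j => y j + ε / 2) ∈ Dom B := by
    apply hball
    rw [mem_ball, dist_pi_lt_iff hε]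
    intro i
    rw [Real.dist_eq]
    rw [abs_of_nonneg (by linarith)]
    linarith
  obtain ⟨b, hbB, hle⟩ := hmem
  exact ⟨b, hbB, ε / 2, by linarith, fun j => hle j⟩

/-- If some element of `B` strictly dominates `y`, then `y` is interior to `Dom B`. -/
lemma mem_interior_Dom {M : ℕ} {B : Set (Fin M → ℝ)} {y b : Fin M → ℝ} (hb : b ∈ B)
    {δ : ℝ} (hδ : 0 < δ) (h : ∀ j, y j + δ ≤ b j) : y ∈ interior (Dom B) := by
  rw [mem_interior_iff_mem_nhds, Metric.mem_nhds_iff]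
  refine ⟨δ, hδ, fun z hz => ⟨b, hb, fun j => ?_⟩⟩
  rw [mem_ball] at hz
  have h1 : dist (z j) (y j) ≤ dist z y := dist_le_pi_dist z y j
  have h2 : z j - y j ≤ |z j - y j| := le_abs_self _
  rw [Real.dist_eq] at h1
  have := h j
  linarith

/-- Point on the Pareto front along the diagonal gives a distance bound. -/
lemma infDist_Par_le {M : ℕ} {B : Set (Fin M → ℝ)} {y : Fin M → ℝ} {t c : ℝ}
    (htc : |t| ≤ c)
    (hmem : (fun j => y j + t) ∈ Dom B)
    (hni : ∀ b ∈ B, ∃ j, b j ≤ y j + t) :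
    Metric.infDist y (Par B) ≤ c := by
  have hfr : (fun j => y j + t) ∈ Par B := by
    refine ⟨subset_closure hmem, fun hint => ?_⟩
    obtain ⟨b, hbB, δ, hδ, hd⟩ := interior_Dom_elim hint
    obtain ⟨j, hj⟩ := hni b hbB
    have := hd j
    linarith
  calc Metric.infDist y (Par B) ≤ dist y (fun j => y j + t) := infDist_le_dist_of_mem hfr
    _ ≤ c := by
        rw [dist_pi_le_iff (le_trans (abs_nonneg t) htc)]
        intro j
        rw [Real.dist_eq]
        simpa using htc

/-- If `y` is within `r` of `Dom B` (finite, nonempty), some `b ∈ B` dominates `y` up to `r`. -/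
lemma exists_dominator {M : ℕ} {B : Set (Fin M → ℝ)} (hB : B.Finite) (hne : B.Nonempty)
    {y : Fin M → ℝ} {r : ℝ} (hr : Metric.infDist y (Dom B) ≤ r) :
    ∃ b ∈ B, ∀ j, y j ≤ b j + r := by
  have hDne : (Dom B).Nonempty := by
    obtain ⟨b, hb⟩ := hne
    exact ⟨b, b, hb, le_refl _⟩
  obtain ⟨z, hz, hdz⟩ := (isClosed_Dom hB).exists_infDist_eq_dist hDne y
  obtain ⟨b, hbB, hzb⟩ := hz
  refine ⟨b, hbB, fun j => ?_⟩
  have h1 : dist (y j) (z j) ≤ dist y z := dist_le_pi_dist y z j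
  rw [Real.dist_eq] at h1
  have h2 : y j - z j ≤ |y j - z j| := le_abs_self _
  have h3 : dist y z ≤ r := by rw [← hdz]; exact hr
  have := hzb j
  linarith

/-- A Pareto point of `Dom B` is not strictly dominated by any `b ∈ B`. -/
lemma pareto_not_dominated {M : ℕ} (hM : 0 < M) {B : Set (Fin M → ℝ)} {y b : Fin M → ℝ}
    (hy : y ∈ frontier (Dom B)) (hb : b ∈ B) : ∃ j, b j ≤ y j := by
  by_contra hcon
  push_neg at hcon
  have hFM : (Finset.univ : Finset (Fin M)).Nonempty := ⟨⟨0, hM⟩, mem_univ _⟩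
  set δ := Finset.univ.inf' hFM (fun j => b j - y j) with hδdef
  have hδpos : 0 < δ := by
    rw [Finset.lt_inf'_iff]
    intro j _
    have := hcon j
    linarith
  exact hy.2 (mem_interior_Dom hb hδpos (fun j => by
    have : δ ≤ b j - y j := Finset.inf'_le _ (mem_univ j)
    linarith))

theorem stmt2 (𝓧 : Type*) [Fintype 𝓧] [Nonempty 𝓧] {M : ℕ} (hM : 0 < M)
    (εlcb εucb εX : ℝ) (hεlcb : 0 ≤ εlcb) (hεucb : 0 ≤ εucb) (hεX : 0 ≤ εX)
    (L U F : 𝓧 → (Fin M → ℝ))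
    (h1 : ∀ x j, L x j - εlcb ≤ F x j) (h2 : ∀ x j, F x j ≤ U x j + εucb)
    (Pihat : Set 𝓧) (hPi : Pihat = {x | L x ∈ Par (Set.range L)})
    (xstar : 𝓧)
    (hx : (⨆ x : 𝓧, Metric.infDist (U x) (Dom (L '' Pihat)))
            - Metric.infDist (U xstar) (Dom (L '' Pihat)) ≤ εX) :
    (∀ y ∈ Par (Set.range F), Metric.infDist y (Par (F '' Pihat)) ≤
        Metric.infDist (U xstar) (Dom (L '' Pihat)) + εlcb + εucb + εX) ∧
    (∀ y ∈ F '' Pihat, Metric.infDist y (Par (Set.range F)) ≤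
        Metric.infDist (U xstar) (Dom (L '' Pihat)) + εlcb + εucb + εX) := by
  have hFM : (Finset.univ : Finset (Fin M)).Nonempty := ⟨⟨0, hM⟩, mem_univ _⟩
  -- Pihat is nonempty
  have hPine : Pihat.Nonempty := by
    obtain ⟨b, hb, hmax⟩ : ∃ m ∈ Finset.univ.image L, ∀ x ∈ Finset.univ.image L, ¬ m < x := by
      obtain ⟨m, hm⟩ := Finset.exists_maximal (s := Finset.univ.image L)
        ⟨L Classical.ofNonempty, Finset.mem_image_of_mem L (mem_univ _)⟩
      exact ⟨m, hm.1, fun x hx hlt => lt_irrefl _ (lt_of_lt_of_le hlt (hm.2 hx hlt.le))⟩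
    obtain ⟨x0, -, rfl⟩ := Finset.mem_image.mp hb
    refine ⟨x0, ?_⟩
    rw [hPi]
    refine ⟨subset_closure ⟨L x0, ⟨x0, rfl⟩, le_refl _⟩, fun hint => ?_⟩
    obtain ⟨b', hb'B, δ, hδ, hd⟩ := interior_Dom_elim hint
    obtain ⟨x', rfl⟩ := hb'B
    refine hmax (L x') (Finset.mem_image_of_mem L (mem_univ _)) ?_
    refine lt_of_le_of_ne (fun j => by have := hd j; linarith) (fun he => ?_)
    have := congrFun he ⟨0, hM⟩
    have := hd ⟨0, hM⟩
    linarith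
  set D := Dom (L '' Pihat) with hD
  set d := Metric.infDist (U xstar) D with hd
  have hd0 : 0 ≤ d := Metric.infDist_nonneg
  set r := d + εX with hr
  have hr0 : 0 ≤ r := by positivity
  have hLPfin : (L '' Pihat).Finite := (Set.toFinite Pihat).image L
  have hLPne : (L '' Pihat).Nonempty := hPine.image L
  -- every U x is within r of D
  have hub : ∀ x : 𝓧, Metric.infDist (U x) D ≤ r := by
    intro x
    have h1' : Metric.infDist (U x) D ≤ ⨆ x' : 𝓧, Metric.infDist (U x') D :=
      le_ciSup (f := fun x' : 𝓧 => Metric.infDist (U x') D) (Set.finite_range _).bddAbove x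
    rw [hr, hd]
    linarith
  have key : ∀ x : 𝓧, ∃ x' ∈ Pihat, ∀ j, U x j ≤ L x' j + r := by
    intro x
    obtain ⟨b, hbB, hble⟩ := exists_dominator hLPfin hLPne (hub x)
    obtain ⟨x', hx', rfl⟩ := hbB
    exact ⟨x', hx', hble⟩
  set c := r + εlcb + εucb with hc
  have hc0 : 0 ≤ c := by positivity
  have hgoal : d + εlcb + εucb + εX = c := by rw [hc, hr]; ring
  constructor
  · -- part (i)
    intro y hy
    have hyDom : y ∈ Dom (Set.range F) := by
      have := hy.1
      rwa [(isClosed_Dom (Set.finite_range F)).closure_eq] at this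
    obtain ⟨b, ⟨x0, rfl⟩, hyb⟩ := hyDom
    obtain ⟨xh, hxh, hUL⟩ := key x0
    -- y ≤ F xh + c pointwise
    have hyF : ∀ j, y j ≤ F xh j + c := by
      intro j
      have := hyb j
      have := h2 x0 j
      have := hUL j
      have := h1 xh j
      rw [hc]
      linarith
    have hPfne : ((Set.toFinite Pihat).toFinset).Nonempty := by
      rwa [Set.Finite.toFinset_nonempty]
    set ψ := ((Set.toFinite Pihat).toFinset).sup' hPfne
      (fun z => Finset.univ.inf' hFM (fun j => F z j - y j)) with hψ
    have hψge : -c ≤ ψ := by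
      refine le_trans ?_ (Finset.le_sup' _ ((Set.toFinite Pihat).mem_toFinset.mpr hxh))
      rw [Finset.le_inf'_iff]
      intro j _
      have := hyF j
      linarith
    have hψle : ψ ≤ 0 := by
      by_contra hcon
      push_neg at hcon
      obtain ⟨z, hz, hzeq⟩ := Finset.exists_mem_eq_sup' hPfne
        (fun z => Finset.univ.inf' hFM (fun j => F z j - y j))
      have hψz : ψ = Finset.univ.inf' hFM (fun j => F z j - y j) := hψ.trans hzeq
      refine hy.2 (mem_interior_Dom (B := Set.range F) ⟨z, rfl⟩ hcon (fun j => ?_))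
      have h3 : Finset.univ.inf' hFM (fun j => F z j - y j) ≤ F z j - y j :=
        Finset.inf'_le _ (mem_univ j)
      linarith
    rw [hgoal]
    apply infDist_Par_le (t := ψ) (abs_le.mpr ⟨hψge, le_trans hψle hc0⟩)
    · obtain ⟨z, hz, hzeq⟩ := Finset.exists_mem_eq_sup' hPfne
        (fun z => Finset.univ.inf' hFM (fun j => F z j - y j))
      refine ⟨F z, ⟨z, (Set.toFinite Pihat).mem_toFinset.mp hz, rfl⟩, fun j => ?_⟩
      have h3 : Finset.univ.inf' hFM (fun j => F z j - y j) ≤ F z j - y j :=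
        Finset.inf'_le _ (mem_univ j)
      have hψz : ψ = Finset.univ.inf' hFM (fun j => F z j - y j) := hψ.trans hzeq
      show y j + ψ ≤ F z j
      linarith
    · rintro b ⟨z, hz, rfl⟩
      have hle : Finset.univ.inf' hFM (fun j => F z j - y j) ≤ ψ := by
        rw [hψ]
        exact Finset.le_sup' (fun z => Finset.univ.inf' hFM (fun j => F z j - y j))
          ((Set.toFinite Pihat).mem_toFinset.mpr hz)
      obtain ⟨j, -, hj⟩ := (Finset.inf'_le_iff hFM).mp hle
      exact ⟨j, by linarith⟩
  · -- part (ii)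
    rintro y ⟨xh, hxh, rfl⟩
    have hXN : (Finset.univ : Finset 𝓧).Nonempty := Finset.univ_nonempty
    set φ := Finset.univ.sup' hXN
      (fun x => Finset.univ.inf' hFM (fun j => F x j - F xh j)) with hφ
    have hφ0 : 0 ≤ φ := by
      refine le_trans ?_ (Finset.le_sup' _ (mem_univ xh))
      rw [Finset.le_inf'_iff]
      intro j _
      simp
    have hxhPar : L xh ∈ frontier (Dom (Set.range L)) := by
      have := hxh; rw [hPi] at this; exact this
    have hφc : φ ≤ c := by
      rw [hφ]
      apply Finset.sup'_le
      intro x _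
      obtain ⟨x', hx', hUL⟩ := key x
      obtain ⟨j, hj⟩ := pareto_not_dominated hM hxhPar (⟨x', rfl⟩ : L x' ∈ Set.range L)
      refine le_trans (Finset.inf'_le _ (mem_univ j)) ?_
      have := h2 x j
      have := hUL j
      have := h1 xh j
      rw [hc]
      linarith
    rw [hgoal]
    apply infDist_Par_le (t := φ) (abs_le.mpr ⟨by linarith, hφc⟩)
    · obtain ⟨x0, -, hx0eq⟩ := Finset.exists_mem_eq_sup' hXN
        (fun x => Finset.univ.inf' hFM (fun j => F x j - F xh j))
      refine ⟨F x0, ⟨x0, rfl⟩, fun j => ?_⟩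
      have h3 : Finset.univ.inf' hFM (fun j => F x0 j - F xh j) ≤ F x0 j - F xh j :=
        Finset.inf'_le _ (mem_univ j)
      have hφz : φ = Finset.univ.inf' hFM (fun j => F x0 j - F xh j) := hφ.trans hx0eq
      show F xh j + φ ≤ F x0 j
      linarith
    · rintro b ⟨x, rfl⟩
      have hle : Finset.univ.inf' hFM (fun j => F x j - F xh j) ≤ φ := by
        rw [hφ]
        exact Finset.le_sup' (fun x => Finset.univ.inf' hFM (fun j => F x j - F xh j))
          (mem_univ x)
      obtain ⟨j, -, hj⟩ := (Finset.inf'_le_iff hFM).mp hle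
      exact ⟨j, by linarith⟩
end

section
/- Let P be a probability measure on a measurable space Ω, and let l, f, u : Ω → ℝ be measurable functions for which there exists C ≥ 0 with |l(ω)| ≤ C and |u(ω)| ≤ C for all ω, and such that l(ω) ≤ f(ω) ≤ u(ω) for all ω ∈ Ω. Set μ_l = ∫ l dP, μ_u = ∫ u dP, m = ∫ f dP, and define ľ(ω) = l(ω) − μ_u and ǔ(ω) = u(ω) − μ_l. Then ∫ ( min{|ľ(ω)|, |ǔ(ω)|} − STR(ľ(ω), ǔ(ω)) ) dP(ω) ≤ ∫ |f(ω) − m| dP(ω) ≤ ∫ max{|ľ(ω)|, |ǔ(ω)|} dP(ω). Moreover, if additionally u(ω) − l(ω) ≤ c for all ω ∈ Ω, then ∫ max{|ľ|, |ǔ|} dP − ∫ ( min{|ľ|, |ǔ|} − STR(ľ, ǔ) ) dP ≤ 2c. -/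
open MeasureTheory

/-- `STR(a,b) = max (min (-a) b) 0`. -/
def STR (a b : ℝ) : ℝ := max (min (-a) b) 0


lemma ptw_lower {a b x : ℝ} (h1 : a ≤ x) (h2 : x ≤ b) :
    min |a| |b| - STR a b ≤ |x| := by
  unfold STR
  rcases abs_cases a with ⟨ha, ha'⟩ | ⟨ha, ha'⟩ <;>
  rcases abs_cases b with ⟨hb, hb'⟩ | ⟨hb, hb'⟩ <;>
  rcases abs_cases x with ⟨hx, hx'⟩ | ⟨hx, hx'⟩ <;>
  rw [ha, hb, hx] <;>
  simp only [max_def, min_def] <;> split_ifs <;> linarith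

lemma ptw_upper {a b x : ℝ} (h1 : a ≤ x) (h2 : x ≤ b) :
    |x| ≤ max |a| |b| := by
  rcases abs_cases a with ⟨ha, ha'⟩ | ⟨ha, ha'⟩ <;>
  rcases abs_cases b with ⟨hb, hb'⟩ | ⟨hb, hb'⟩ <;>
  rcases abs_cases x with ⟨hx, hx'⟩ | ⟨hx, hx'⟩ <;>
  rw [ha, hb, hx] <;>
  simp only [max_def] <;> split_ifs <;> linarith

lemma ptw_gap {a b : ℝ} (h : a ≤ b) :
    max |a| |b| - (min |a| |b| - STR a b) ≤ b - a := by
  unfold STR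
  rcases abs_cases a with ⟨ha, ha'⟩ | ⟨ha, ha'⟩ <;>
  rcases abs_cases b with ⟨hb, hb'⟩ | ⟨hb, hb'⟩ <;>
  rw [ha, hb] <;>
  simp only [max_def, min_def] <;> split_ifs <;> linarith

lemma ptw_bd1 (a b : ℝ) : |min |a| |b| - STR a b| ≤ |a| + |b| := by
  have h0 : (0:ℝ) ≤ STR a b := le_max_right _ _
  have h1 : STR a b ≤ |a| :=
    max_le (le_trans (min_le_left _ _) (neg_le_abs a)) (abs_nonneg a)
  have h2 : 0 ≤ min |a| |b| := le_min (abs_nonneg a) (abs_nonneg b)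
  have h3 : min |a| |b| ≤ |a| := min_le_left _ _
  have h4 : 0 ≤ |b| := abs_nonneg b
  exact abs_le.2 ⟨by linarith, by linarith⟩

lemma ptw_bd2 (a b : ℝ) : abs (max |a| |b|) ≤ |a| + |b| := by
  rw [abs_of_nonneg (le_max_of_le_left (abs_nonneg a))]
  rcases max_cases |a| |b| with ⟨h,_⟩|⟨h,_⟩ <;> rw [h]
  · linarith [abs_nonneg b]
  · linarith [abs_nonneg a]

theorem stmt11 {Ω : Type*} [MeasurableSpace Ω] (P : Measure Ω) [IsProbabilityMeasure P]
    (l f u : Ω → ℝ) (hlm : Measurable l) (hfm : Measurable f) (hum : Measurable u)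
    (C : ℝ) (hC : 0 ≤ C) (hCl : ∀ ω, |l ω| ≤ C) (hCu : ∀ ω, |u ω| ≤ C)
    (hlf : ∀ ω, l ω ≤ f ω) (hfu : ∀ ω, f ω ≤ u ω)
    (μl μu m : ℝ) (hμl : μl = ∫ ω, l ω ∂P) (hμu : μu = ∫ ω, u ω ∂P)
    (hm : m = ∫ ω, f ω ∂P) :
    ((∫ ω, (min |l ω - μu| |u ω - μl| - STR (l ω - μu) (u ω - μl)) ∂P ≤
        ∫ ω, |f ω - m| ∂P) ∧
     (∫ ω, |f ω - m| ∂P ≤ ∫ ω, max |l ω - μu| |u ω - μl| ∂P)) ∧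
    (∀ c : ℝ, (∀ ω, u ω - l ω ≤ c) →
      (∫ ω, max |l ω - μu| |u ω - μl| ∂P) -
        (∫ ω, (min |l ω - μu| |u ω - μl| - STR (l ω - μu) (u ω - μl)) ∂P) ≤ 2 * c) := by
  have key : ∀ (g : Ω → ℝ), Measurable g → ∀ (B : ℝ), (∀ ω, |g ω| ≤ B) → Integrable g P :=
    fun g hg B hB => ⟨hg.aestronglyMeasurable,
      HasFiniteIntegral.of_bounded (C := B) (Filter.Eventually.of_forall fun ω => by
        simpa [Real.norm_eq_abs] using hB ω)⟩
  have hCf : ∀ ω, |f ω| ≤ C := fun ω => abs_le.2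
    ⟨le_trans (abs_le.1 (hCl ω)).1 (hlf ω), le_trans (hfu ω) (abs_le.1 (hCu ω)).2⟩
  have hintl : Integrable l P := key l hlm C hCl
  have hintu : Integrable u P := key u hum C hCu
  have hintf : Integrable f P := key f hfm C hCf
  have hmu : m ≤ μu := by rw [hm, hμu]; exact integral_mono hintf hintu hfu
  have hml : μl ≤ m := by rw [hm, hμl]; exact integral_mono hintl hintf hlf
  have hμlu : μl ≤ μu := le_trans hml hmu
  have ha : ∀ ω, l ω - μu ≤ f ω - m := fun ω => by linarith [hlf ω]
  have hb : ∀ ω, f ω - m ≤ u ω - μl := fun ω => by linarith [hfu ω]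
  -- measurability of integrands
  have m1 : Measurable fun ω => min |l ω - μu| |u ω - μl| - STR (l ω - μu) (u ω - μl) := by
    unfold STR
    exact (((hlm.sub measurable_const).abs.min (hum.sub measurable_const).abs).sub
      (((hlm.sub measurable_const).neg.min (hum.sub measurable_const)).max measurable_const))
  have m2 : Measurable fun ω => |f ω - m| := (hfm.sub measurable_const).abs
  have m3 : Measurable fun ω => max |l ω - μu| |u ω - μl| :=
    (hlm.sub measurable_const).abs.max (hum.sub measurable_const).abs
  have babs : ∀ ω, |l ω - μu| + |u ω - μl| ≤ 2*C + |μu| + |μl| := fun ω => by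
    have := abs_sub (l ω) μu
    have := abs_sub (u ω) μl
    have := hCl ω; have := hCu ω
    linarith [abs_sub_abs_le_abs_sub (l ω) μu, abs_sub (l ω) μu, abs_sub (u ω) μl]
  have i1 : Integrable (fun ω => min |l ω - μu| |u ω - μl| - STR (l ω - μu) (u ω - μl)) P :=
    key _ m1 (2*C + |μu| + |μl|) fun ω => le_trans (ptw_bd1 _ _) (babs ω)
  have i2 : Integrable (fun ω => |f ω - m|) P :=
    key _ m2 (C + |m|) fun ω => by
      rw [abs_abs]; calc |f ω - m| ≤ |f ω| + |m| := abs_sub _ _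
        _ ≤ C + |m| := by linarith [hCf ω]
  have i3 : Integrable (fun ω => max |l ω - μu| |u ω - μl|) P :=
    key _ m3 (2*C + |μu| + |μl|) fun ω => le_trans (ptw_bd2 _ _) (babs ω)
  refine ⟨⟨integral_mono i1 i2 fun ω => ptw_lower (ha ω) (hb ω),
    integral_mono i2 i3 fun ω => ptw_upper (ha ω) (hb ω)⟩, ?_⟩
  intro c hc
  have hdiff : (∫ ω, u ω - l ω ∂P) = μu - μl := by
    rw [integral_sub hintu hintl, hμu, hμl]
  have hcc : μu - μl ≤ c := by
    rw [← hdiff]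
    calc (∫ ω, u ω - l ω ∂P) ≤ ∫ _, c ∂P := integral_mono (hintu.sub hintl)
          (integrable_const c) hc
      _ = c := by simp
  rw [← integral_sub i3 i1]
  calc (∫ ω, (max |l ω - μu| |u ω - μl| -
          (min |l ω - μu| |u ω - μl| - STR (l ω - μu) (u ω - μl))) ∂P)
      ≤ ∫ ω, ((u ω - μl) - (l ω - μu)) ∂P := by
        refine integral_mono (i3.sub i1) ((hintu.sub (integrable_const μl)).sub
          (hintl.sub (integrable_const μu))) fun ω => ptw_gap (le_trans (ha ω) (hb ω))
    _ = (μu - μl) + (μu - μl) := by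
        have he : (fun ω => (u ω - μl) - (l ω - μu)) = fun ω => (u ω - l ω) + (μu - μl) := by
          funext ω; ring
        have hul : Integrable (fun ω => u ω - l ω) P := hintu.sub hintl
        rw [he, integral_add hul (integrable_const _), hdiff, integral_const]
        simp
    _ ≤ 2 * c := by linarith
end

section
/- Let P be a probability measure on a measurable space Ω, and let l, f, u : Ω → ℝ be measurable functions for which there exists C ≥ 0 with |l(ω)| ≤ C and |u(ω)| ≤ C for all ω, and such that l(ω) ≤ f(ω) ≤ u(ω) for all ω ∈ Ω. Set μ_l = ∫ l dP, μ_u = ∫ u dP, m = ∫ f dP, and define ľ(ω) = l(ω) − μ_u and ǔ(ω) = u(ω) − μ_l. Then ∫ ( min{ľ(ω)², ǔ(ω)²} − STR(ľ(ω), ǔ(ω))² ) dP(ω) ≤ ∫ (f(ω) − m)² dP(ω) ≤ ∫ max{ľ(ω)², ǔ(ω)²} dP(ω). -/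
open MeasureTheory

lemma ptwise_lower (a x b : ℝ) (h1 : a ≤ x) (h2 : x ≤ b) :
    min (a ^ 2) (b ^ 2) - (STR a b) ^ 2 ≤ x ^ 2 := by
  unfold STR
  rcases le_or_gt a 0 with ha | ha
  · rcases le_or_gt 0 b with hb | hb
    · have h0 : (0:ℝ) ≤ min (-a) b := le_min (by linarith) hb
      rw [max_eq_left h0]
      have : min (a ^ 2) (b ^ 2) = (min (-a) b) ^ 2 := by
        rcases le_total (-a) b with h | h
        · rw [min_eq_left h, min_eq_left (by nlinarith), neg_pow, ]
          simp [pow_two]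
        · rw [min_eq_right h, min_eq_right (by nlinarith)]
      rw [this]
      nlinarith [sq_nonneg x]
    · have h0 : max (min (-a) b) 0 = 0 := max_eq_right (le_of_lt (lt_of_le_of_lt (min_le_right _ _) hb))
      rw [h0]
      have : min (a ^ 2) (b ^ 2) ≤ b ^ 2 := min_le_right _ _
      nlinarith
  · have : max (min (-a) b) 0 = 0 := max_eq_right (le_of_lt (lt_of_le_of_lt (min_le_left _ _) (by linarith)))
    rw [this]
    have : min (a ^ 2) (b ^ 2) ≤ a ^ 2 := min_le_left _ _
    nlinarith

lemma ptwise_upper (a x b : ℝ) (h1 : a ≤ x) (h2 : x ≤ b) :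
    x ^ 2 ≤ max (a ^ 2) (b ^ 2) := by
  rcases le_or_gt 0 x with hx | hx
  · exact le_max_of_le_right (by nlinarith)
  · exact le_max_of_le_left (by nlinarith)

lemma STR_bound (a b : ℝ) : (STR a b) ^ 2 ≤ b ^ 2 ∨ STR a b = 0 := by
  unfold STR
  rcases le_or_gt (min (-a) b) 0 with h | h
  · exact Or.inr (max_eq_right h)
  · left
    rw [max_eq_left h.le]
    have hb : 0 < b := lt_of_lt_of_le h (min_le_right _ _)
    have : min (-a) b ≤ b := min_le_right _ _
    nlinarith

theorem stmt12 {Ω : Type*} [MeasurableSpace Ω] (P : Measure Ω) [IsProbabilityMeasure P]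
    (l f u : Ω → ℝ) (hlm : Measurable l) (hfm : Measurable f) (hum : Measurable u)
    (C : ℝ) (hC : 0 ≤ C) (hCl : ∀ ω, |l ω| ≤ C) (hCu : ∀ ω, |u ω| ≤ C)
    (hlf : ∀ ω, l ω ≤ f ω) (hfu : ∀ ω, f ω ≤ u ω)
    (μl μu m : ℝ) (hμl : μl = ∫ ω, l ω ∂P) (hμu : μu = ∫ ω, u ω ∂P)
    (hm : m = ∫ ω, f ω ∂P) :
    (∫ ω, (min ((l ω - μu) ^ 2) ((u ω - μl) ^ 2) - (STR (l ω - μu) (u ω - μl)) ^ 2) ∂P ≤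
      ∫ ω, (f ω - m) ^ 2 ∂P) ∧
    (∫ ω, (f ω - m) ^ 2 ∂P ≤ ∫ ω, max ((l ω - μu) ^ 2) ((u ω - μl) ^ 2) ∂P) := by
  have hCf : ∀ ω, |f ω| ≤ C := fun ω => abs_le.mpr
    ⟨le_trans (abs_le.mp (hCl ω)).1 (hlf ω), le_trans (hfu ω) (abs_le.mp (hCu ω)).2⟩
  have hil : Integrable l P :=
    (integrable_const C).mono' hlm.aestronglyMeasurable (ae_of_all _ fun ω => by
      simpa using hCl ω)
  have hiu : Integrable u P :=
    (integrable_const C).mono' hum.aestronglyMeasurable (ae_of_all _ fun ω => by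
      simpa using hCu ω)
  have hif : Integrable f P :=
    (integrable_const C).mono' hfm.aestronglyMeasurable (ae_of_all _ fun ω => by
      simpa using hCf ω)
  have hml : μl ≤ m := by
    rw [hμl, hm]; exact integral_mono hil hif hlf
  have hmu : m ≤ μu := by
    rw [hμu, hm]; exact integral_mono hif hiu hfu
  -- pointwise sandwich for f ω - m
  have hsand : ∀ ω, l ω - μu ≤ f ω - m ∧ f ω - m ≤ u ω - μl := fun ω =>
    ⟨by linarith [hlf ω], by linarith [hfu ω]⟩
  set K : ℝ := C + |μl| + |μu| + |m| with hK
  have hK0 : 0 ≤ K := by positivity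
  have hbl : ∀ ω, |l ω - μu| ≤ K := fun ω => by
    have := hCl ω; have := abs_sub_abs_le_abs_sub (l ω) μu
    have := abs_sub (l ω) μu
    calc |l ω - μu| ≤ |l ω| + |μu| := abs_sub _ _
      _ ≤ K := by simp [hK]; linarith [hCl ω, abs_nonneg μl, abs_nonneg m]
  have hbu : ∀ ω, |u ω - μl| ≤ K := fun ω => by
    calc |u ω - μl| ≤ |u ω| + |μl| := abs_sub _ _
      _ ≤ K := by simp [hK]; linarith [hCu ω, abs_nonneg μu, abs_nonneg m]
  have hbf : ∀ ω, |f ω - m| ≤ K := fun ω => by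
    calc |f ω - m| ≤ |f ω| + |m| := abs_sub _ _
      _ ≤ K := by simp [hK]; linarith [hCf ω, abs_nonneg μu, abs_nonneg μl]
  -- measurability of the integrands
  have hma : Measurable fun ω => l ω - μu := hlm.sub measurable_const
  have hmb : Measurable fun ω => u ω - μl := hum.sub measurable_const
  have hmlo : Measurable fun ω =>
      min ((l ω - μu) ^ 2) ((u ω - μl) ^ 2) - (STR (l ω - μu) (u ω - μl)) ^ 2 := by
    unfold STR
    exact ((hma.pow_const 2).min (hmb.pow_const 2)).sub
      (((hma.neg.min hmb).max measurable_const).pow_const 2)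
  have hmmid : Measurable fun ω => (f ω - m) ^ 2 := (hfm.sub measurable_const).pow_const 2
  have hmhi : Measurable fun ω => max ((l ω - μu) ^ 2) ((u ω - μl) ^ 2) :=
    (hma.pow_const 2).max (hmb.pow_const 2)
  -- integrability via bounds
  have hsq : ∀ y : ℝ, |y| ≤ K → y ^ 2 ≤ K ^ 2 := fun y hy => by nlinarith [abs_nonneg y, sq_abs y]
  have hilo : Integrable (fun ω =>
      min ((l ω - μu) ^ 2) ((u ω - μl) ^ 2) - (STR (l ω - μu) (u ω - μl)) ^ 2) P := by
    refine (integrable_const (2 * K ^ 2)).mono' hmlo.aestronglyMeasurable (ae_of_all _ fun ω => ?_)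
    have h1 : min ((l ω - μu) ^ 2) ((u ω - μl) ^ 2) ≤ K ^ 2 :=
      le_trans (min_le_left _ _) (hsq _ (hbl ω))
    have h2 : (0:ℝ) ≤ min ((l ω - μu) ^ 2) ((u ω - μl) ^ 2) :=
      le_min (sq_nonneg _) (sq_nonneg _)
    have h3 : (STR (l ω - μu) (u ω - μl)) ^ 2 ≤ K ^ 2 := by
      rcases STR_bound (l ω - μu) (u ω - μl) with h | h
      · exact le_trans h (hsq _ (hbu ω))
      · rw [h]; nlinarith
    have h4 : (0:ℝ) ≤ (STR (l ω - μu) (u ω - μl)) ^ 2 := sq_nonneg _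
    rw [Real.norm_eq_abs]
    have h5 := abs_sub (min ((l ω - μu) ^ 2) ((u ω - μl) ^ 2)) ((STR (l ω - μu) (u ω - μl)) ^ 2)
    rw [abs_of_nonneg h2, abs_of_nonneg h4] at h5
    linarith
  have himid : Integrable (fun ω => (f ω - m) ^ 2) P := by
    refine (integrable_const (K ^ 2)).mono' hmmid.aestronglyMeasurable (ae_of_all _ fun ω => ?_)
    rw [Real.norm_eq_abs, abs_of_nonneg (sq_nonneg _)]
    exact hsq _ (hbf ω)
  have hihi : Integrable (fun ω => max ((l ω - μu) ^ 2) ((u ω - μl) ^ 2)) P := by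
    refine (integrable_const (K ^ 2)).mono' hmhi.aestronglyMeasurable (ae_of_all _ fun ω => ?_)
    rw [Real.norm_eq_abs, abs_of_nonneg (le_trans (sq_nonneg _) (le_max_left _ _))]
    exact max_le (hsq _ (hbl ω)) (hsq _ (hbu ω))
  constructor
  · exact integral_mono hilo himid fun ω =>
      ptwise_lower _ _ _ (hsand ω).1 (hsand ω).2
  · exact integral_mono himid hihi fun ω =>
      ptwise_upper _ _ _ (hsand ω).1 (hsand ω).2
end

section
/- Let t, d be natural numbers, X a t × d real matrix, s : Fin t → ℝ with s(i) > 0 for all i, and c > 0. Let S = diagonal(s), let X̃ = diagonal(i ↦ (√(s(i)))⁻¹) · X, and let I_t denote the t × t identity matrix. Then Xᵀ · (X·Xᵀ + c·S)⁻¹ · X = X̃ᵀ · (X̃·X̃ᵀ + c·I_t)⁻¹ · X̃, where both inverted matrices are invertible (each is the sum of a positive semidefinite matrix and a positive definite matrix). -/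
open Matrix

theorem stmt15 (t d : ℕ) (X : Matrix (Fin t) (Fin d) ℝ) (s : Fin t → ℝ)
    (hs : ∀ i, 0 < s i) (c : ℝ) (hc : 0 < c)
    (S : Matrix (Fin t) (Fin t) ℝ) (hS : S = Matrix.diagonal s)
    (Xt : Matrix (Fin t) (Fin d) ℝ)
    (hXt : Xt = Matrix.diagonal (fun i => (Real.sqrt (s i))⁻¹) * X) :
    (IsUnit (X * Xᵀ + c • S) ∧
     IsUnit (Xt * Xtᵀ + c • (1 : Matrix (Fin t) (Fin t) ℝ))) ∧
    Xᵀ * (X * Xᵀ + c • S)⁻¹ * X =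
      Xtᵀ * (Xt * Xtᵀ + c • (1 : Matrix (Fin t) (Fin t) ℝ))⁻¹ * Xt := by
  set D : Matrix (Fin t) (Fin t) ℝ := Matrix.diagonal (fun i => Real.sqrt (s i)) with hD
  set E : Matrix (Fin t) (Fin t) ℝ := Matrix.diagonal (fun i => (Real.sqrt (s i))⁻¹) with hE
  have hsq : ∀ i, Real.sqrt (s i) ≠ 0 := fun i => (Real.sqrt_pos.mpr (hs i)).ne'
  have hDE : D * E = 1 := by
    rw [hD, hE, Matrix.diagonal_mul_diagonal]
    rw [show (fun i => Real.sqrt (s i) * (Real.sqrt (s i))⁻¹) = fun _ => (1:ℝ) from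
      funext fun i => mul_inv_cancel₀ (hsq i)]
    exact Matrix.diagonal_one
  have hED : E * D = 1 := by
    rw [hD, hE, Matrix.diagonal_mul_diagonal]
    rw [show (fun i => (Real.sqrt (s i))⁻¹ * Real.sqrt (s i)) = fun _ => (1:ℝ) from
      funext fun i => inv_mul_cancel₀ (hsq i)]
    exact Matrix.diagonal_one
  have hX : X = D * Xt := by
    rw [hXt, ← Matrix.mul_assoc, hDE, Matrix.one_mul]
  have hDD : D * D = S := by
    rw [hD, hS, Matrix.diagonal_mul_diagonal]
    exact congrArg Matrix.diagonal (funext fun i => Real.mul_self_sqrt (hs i).le)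
  have hDt : Dᵀ = D := Matrix.diagonal_transpose _
  set M : Matrix (Fin t) (Fin t) ℝ := Xt * Xtᵀ + c • (1 : Matrix (Fin t) (Fin t) ℝ) with hM
  -- M is PosDef
  have hMpd : M.PosDef := by
    have h1 : (Xt * Xtᵀ).PosSemidef := by
      have := Matrix.posSemidef_self_mul_conjTranspose Xt
      rwa [Matrix.conjTranspose_eq_transpose_of_trivial] at this
    have h2 : (c • (1 : Matrix (Fin t) (Fin t) ℝ)).PosDef := by
      rw [smul_one_eq_diagonal]
      exact Matrix.posDef_diagonal_iff.mpr fun _ => hc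
    exact Matrix.PosDef.posSemidef_add h1 h2
  have hMunit : IsUnit M := hMpd.isUnit
  have hDunit : IsUnit D := by
    rw [hD, Matrix.isUnit_diagonal]
    exact IsUnit.of_mul_eq_one (fun i => (Real.sqrt (s i))⁻¹)
      (funext fun i => mul_inv_cancel₀ (hsq i))
  have hfact : X * Xᵀ + c • S = D * M * D := by
    rw [hX, Matrix.transpose_mul, hDt, hM]
    rw [← hDD]
    simp only [Matrix.mul_add, Matrix.add_mul, Matrix.mul_smul, Matrix.smul_mul,
      Matrix.mul_one, Matrix.one_mul, Matrix.mul_assoc]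
  have hEinv : D⁻¹ = E := Matrix.inv_eq_right_inv hDE
  have hunit1 : IsUnit (X * Xᵀ + c • S) := by
    rw [hfact]; exact (hDunit.mul hMunit).mul hDunit
  refine ⟨⟨hunit1, hMunit⟩, ?_⟩
  rw [hfact, hX, Matrix.transpose_mul, hDt]
  rw [Matrix.mul_inv_rev, Matrix.mul_inv_rev, hEinv]
  calc Xtᵀ * D * (E * (M⁻¹ * E)) * (D * Xt)
      = Xtᵀ * ((D * E) * M⁻¹ * (E * D)) * Xt := by simp only [Matrix.mul_assoc]
    _ = Xtᵀ * M⁻¹ * Xt := by rw [hDE, hED, Matrix.one_mul, Matrix.mul_one]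
end

section
/- Let 𝓧 be a nonempty finite set, M a positive integer, and L, U : 𝓧 → ℝ^M. Let Π̂ = {x ∈ 𝓧 : L(x) ∈ Par(L(𝓧))}. Then for every x ∈ 𝓧, infDist(U(x), Dom(L(Π̂))) ≤ d∞(U(x), L(x)), i.e., the infimum sup-metric distance from U(x) to the dominated region of L(Π̂) is at most the sup-metric distance between U(x) and L(x). -/
lemma maximal_mem_par {M : ℕ} (hM : 0 < M) (B : Set (Fin M → ℝ))
    (y : Fin M → ℝ) (hy : y ∈ B) (hmax : ∀ b ∈ B, y ≤ b → y = b) :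
    y ∈ Par B := by
  have hyDom : y ∈ Dom B := ⟨y, hy, le_refl y⟩
  constructor
  · exact subset_closure hyDom
  · intro hint
    rw [mem_interior_iff_mem_nhds, Metric.mem_nhds_iff] at hint
    obtain ⟨ε, hε, hball⟩ := hint
    set y' : Fin M → ℝ := fun i => y i + ε / 2 with hy'
    have hmem : y' ∈ Metric.ball y ε := by
      rw [Metric.mem_ball, dist_pi_lt_iff hε]
      intro i
      simp [hy', Real.dist_eq, abs_div, abs_of_pos hε]
      linarith
    obtain ⟨b, hb, hle⟩ := hball hmem
    have hyb : y ≤ b := by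
      intro i
      have := hle i
      simp only [hy'] at this
      linarith
    have := hmax b hb hyb
    subst this
    have := hle ⟨0, hM⟩
    simp [hy'] at this
    linarith

theorem stmt18 (𝓧 : Type*) [Fintype 𝓧] [Nonempty 𝓧] {M : ℕ} (hM : 0 < M)
    (L U : 𝓧 → (Fin M → ℝ))
    (Pihat : Set 𝓧) (hPi : Pihat = {x | L x ∈ Par (Set.range L)}) :
    ∀ x : 𝓧, Metric.infDist (U x) (Dom (L '' Pihat)) ≤ dist (U x) (L x) := by
  intro x
  -- find a maximal element above L x
  have hfin : ({y ∈ Set.range L | L x ≤ y} : Set (Fin M → ℝ)).Finite :=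
    (Set.finite_range L).subset (Set.sep_subset _ _)
  have hne : ({y ∈ Set.range L | L x ≤ y} : Set (Fin M → ℝ)).Nonempty :=
    ⟨L x, ⟨x, rfl⟩, le_refl _⟩
  obtain ⟨m, hm, hmax⟩ := hfin.exists_maximalFor id _ hne
  obtain ⟨⟨x', hx'⟩, hlem⟩ := hm
  have hmaxB : ∀ b ∈ Set.range L, m ≤ b → m = b := by
    intro b hb hmb
    exact le_antisymm hmb (hmax ⟨hb, le_trans hlem hmb⟩ hmb)
  have hmPar : m ∈ Par (Set.range L) := maximal_mem_par hM _ m ⟨x', hx'⟩ hmaxB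
  have hx'Pi : x' ∈ Pihat := by rw [hPi]; simpa [hx'] using hmPar
  have hLxDom : L x ∈ Dom (L '' Pihat) := ⟨m, ⟨x', hx'Pi, hx'⟩, hlem⟩
  exact Metric.infDist_le_dist_of_mem hLxDom
end
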